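/- Let u be an L^2 solution of mass-critical NLS blowing up at time T with asymptotic profile z^* ∈ L^2 in the sense that ‖u(t) − z^*‖_{L^2(|x| ≥ ρ√(T−t))} → 0 as t → T for every ρ > 0, and suppose M(z^*) ≤ M(u) − M(Q) and λ(t_n) → 0 along some sequence t_n → T with M(1_{|x| ≥ λ(t_n)}(u(t_n) − z^*)) ≤ δ^2. Then limsup_n M(1_{|x| < λ(t_n)} u(t_n)) ≥ M(Q) − δ^2. -/

import Mathlib

open MeasureTheory Filter
open scoped ENNReal NNReal

/-- Mass of an L² function. -/
noncomputable def massOf {d : ℕ} (f : EuclideanSpace ℝ (Fin d) → ℂ) : ℝ :=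
  ∫ x, ‖f x‖ ^ 2

section Helpers

variable {α : Type*} {m : MeasurableSpace α} {μ : Measure α}
variable {E : Type*} [NormedAddCommGroup E]

lemma my_int_mul {f g : α → E} (hf : MemLp f 2 μ) (hg : MemLp g 2 μ) :
    Integrable (fun a => ‖f a‖ * ‖g a‖) μ := by
  rw [← memLp_one_iff_integrable]
  have h121 : (1 : ℝ≥0∞) / 1 = 1 / 2 + 1 / 2 := by
    norm_num [ENNReal.inv_two_add_inv_two]
  have h := MemLp.smul (𝕜 := ℝ) (r := 1) hg.norm hf.norm
  exact h

lemma my_cs2 {f g : α → E} (hf : MemLp f 2 μ) (hg : MemLp g 2 μ) :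
    ∫ a, ‖f a‖ * ‖g a‖ ∂μ ≤
      Real.sqrt (∫ a, ‖f a‖ ^ 2 ∂μ) * Real.sqrt (∫ a, ‖g a‖ ^ 2 ∂μ) := by
  have hpq : Real.HolderConjugate 2 2 := ⟨by norm_num, by norm_num, by norm_num⟩
  have h := integral_mul_norm_le_Lp_mul_Lq (μ := μ) hpq
    (by simpa using hf) (by simpa using hg)
  have e2 : ∀ x : ℝ, x ^ (2 : ℝ) = x ^ 2 := fun x => by
    rw [show (2 : ℝ) = ((2 : ℕ) : ℝ) by norm_num, Real.rpow_natCast]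
  simp only [e2] at h
  calc ∫ a, ‖f a‖ * ‖g a‖ ∂μ
      ≤ (∫ a, ‖f a‖ ^ 2 ∂μ) ^ (1 / (2:ℝ)) * (∫ a, ‖g a‖ ^ 2 ∂μ) ^ (1 / (2:ℝ)) := h
    _ = _ := by rw [← Real.sqrt_eq_rpow, ← Real.sqrt_eq_rpow]

lemma my_mink {f g : α → E} (hf : MemLp f 2 μ) (hg : MemLp g 2 μ) :
    Real.sqrt (∫ a, ‖f a + g a‖ ^ 2 ∂μ) ≤
      Real.sqrt (∫ a, ‖f a‖ ^ 2 ∂μ) + Real.sqrt (∫ a, ‖g a‖ ^ 2 ∂μ) := by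
  set A := Real.sqrt (∫ a, ‖f a‖ ^ 2 ∂μ)
  set B := Real.sqrt (∫ a, ‖g a‖ ^ 2 ∂μ)
  have hA : 0 ≤ A := Real.sqrt_nonneg _
  have hB : 0 ≤ B := Real.sqrt_nonneg _
  have hif : Integrable (fun a => ‖f a‖ ^ 2) μ :=
    (memLp_two_iff_integrable_sq_norm hf.1).mp hf
  have hig : Integrable (fun a => ‖g a‖ ^ 2) μ :=
    (memLp_two_iff_integrable_sq_norm hg.1).mp hg
  have hifg : Integrable (fun a => ‖f a‖ * ‖g a‖) μ := my_int_mul hf hg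
  have key : ∫ a, ‖f a + g a‖ ^ 2 ∂μ ≤ (A + B) ^ 2 := by
    have h1 : ∫ a, ‖f a + g a‖ ^ 2 ∂μ ≤
        ∫ a, (‖f a‖ ^ 2 + 2 * (‖f a‖ * ‖g a‖) + ‖g a‖ ^ 2) ∂μ := by
      refine integral_mono_of_nonneg (Eventually.of_forall fun a => by positivity)
        (by exact (hif.add (hifg.const_mul 2)).add hig)
        (Eventually.of_forall fun a => ?_)
      dsimp only
      have ht := pow_le_pow_left₀ (norm_nonneg (f a + g a)) (norm_add_le (f a) (g a)) 2
      nlinarith [ht]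
    have h2 : ∫ a, (‖f a‖ ^ 2 + 2 * (‖f a‖ * ‖g a‖) + ‖g a‖ ^ 2) ∂μ
        = (∫ a, ‖f a‖ ^ 2 ∂μ) + 2 * (∫ a, ‖f a‖ * ‖g a‖ ∂μ) + ∫ a, ‖g a‖ ^ 2 ∂μ := by
      have hi1 : Integrable (fun a => ‖f a‖ ^ 2 + 2 * (‖f a‖ * ‖g a‖)) μ :=
        hif.add (hifg.const_mul 2)
      rw [integral_add hi1 hig, integral_add hif (hifg.const_mul 2),
        integral_const_mul]
    have h3 := my_cs2 hf hg
    have hAs : A ^ 2 = ∫ a, ‖f a‖ ^ 2 ∂μ :=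
      Real.sq_sqrt (integral_nonneg fun a => by positivity)
    have hBs : B ^ 2 = ∫ a, ‖g a‖ ^ 2 ∂μ :=
      Real.sq_sqrt (integral_nonneg fun a => by positivity)
    nlinarith
  calc Real.sqrt (∫ a, ‖f a + g a‖ ^ 2 ∂μ) ≤ Real.sqrt ((A + B) ^ 2) :=
        Real.sqrt_le_sqrt key
    _ = A + B := Real.sqrt_sq (by positivity)

/-- workhorse arithmetic step -/
lemma sqrt_step {a b w c : ℝ} (ha : 0 ≤ a) (hb : 0 ≤ b)
    (h : Real.sqrt b ≤ Real.sqrt a + Real.sqrt w) (hc : c ≤ b) :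
    (max 0 (Real.sqrt (max 0 c) - Real.sqrt w)) ^ 2 ≤ a := by
  have h1 : Real.sqrt (max 0 c) ≤ Real.sqrt b := Real.sqrt_le_sqrt (max_le hb hc)
  have h2 : max 0 (Real.sqrt (max 0 c) - Real.sqrt w) ≤ Real.sqrt a := by
    refine max_le (Real.sqrt_nonneg _) ?_
    linarith
  calc (max 0 (Real.sqrt (max 0 c) - Real.sqrt w)) ^ 2
      ≤ Real.sqrt a ^ 2 := pow_le_pow_left₀ (le_max_left _ _) h2 2
    _ = a := Real.sq_sqrt ha

/-- integral over shrinking balls tends to zero -/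
lemma ball_tendsto_zero {d : ℕ} (hd : 1 ≤ d) {h : EuclideanSpace ℝ (Fin d) → ℝ}
    (hint : Integrable h (volume : Measure (EuclideanSpace ℝ (Fin d))))
    (hh : ∀ x, 0 ≤ h x) {c : ℕ → ℝ} (hc : Tendsto c atTop (nhds 0)) :
    Tendsto (fun n => ∫ x in {x : EuclideanSpace ℝ (Fin d) | ‖x‖ < c n}, h x)
      atTop (nhds 0) := by
  haveI : Nonempty (Fin d) := ⟨⟨0, hd⟩⟩
  haveI : Nontrivial (EuclideanSpace ℝ (Fin d)) := inferInstance
  set s : ℕ → Set (EuclideanSpace ℝ (Fin d)) :=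
    fun k => {x | ‖x‖ < 1 / (k + 1 : ℝ)} with hs
  have hsm : ∀ k, MeasurableSet (s k) := fun k =>
    (isOpen_lt continuous_norm continuous_const).measurableSet
  have hanti : Antitone s := by
    intro k l hkl x hx
    have hkl' : (k : ℝ) ≤ (l : ℝ) := Nat.cast_le.mpr hkl
    have h1 : (1 : ℝ) / (l + 1) ≤ 1 / (k + 1) := by
      apply one_div_le_one_div_of_le (by positivity)
      linarith
    exact lt_of_lt_of_le hx h1
  have hInter : ⋂ k, s k = {(0 : EuclideanSpace ℝ (Fin d))} := by
    ext x
    simp only [Set.mem_iInter, hs, Set.mem_setOf_eq, Set.mem_singleton_iff]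
    constructor
    · intro hx
      by_contra hne
      have hpos : 0 < ‖x‖ := norm_pos_iff.mpr hne
      obtain ⟨k, hk⟩ := exists_nat_gt (1 / ‖x‖)
      have hlt : 1 / ((k : ℝ) + 1) < ‖x‖ := by
        rw [div_lt_iff₀ (by positivity)]
        rw [div_lt_iff₀ hpos] at hk
        nlinarith
      exact absurd (hx k) (not_lt.mpr hlt.le)
    · intro hx; subst hx; intro k
      simp only [norm_zero]
      positivity
  have hlim : Tendsto (fun k => ∫ x in s k, h x) atTop
      (nhds (∫ x in ⋂ k, s k, h x)) :=
    tendsto_setIntegral_of_antitone hsm hanti ⟨0, hint.integrableOn⟩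
  have h0 : (∫ x in ⋂ k, s k, h x) = 0 := by
    rw [hInter, Measure.restrict_eq_zero.mpr (measure_singleton _)]
    exact integral_zero_measure _
  rw [h0] at hlim
  rw [tendsto_order]
  constructor
  · intro b hb
    filter_upwards with n
    exact lt_of_lt_of_le hb (setIntegral_nonneg
      (isOpen_lt continuous_norm continuous_const).measurableSet fun x _ => hh x)
  · intro b hb
    obtain ⟨k, hk⟩ : ∃ k, ∫ x in s k, h x < b :=
      (hlim.eventually (eventually_lt_nhds hb)).exists
    have hev : ∀ᶠ n in atTop, c n < 1 / (k + 1 : ℝ) :=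
      hc.eventually (eventually_lt_nhds (by positivity))
    filter_upwards [hev] with n hn
    refine lt_of_le_of_lt ?_ hk
    refine setIntegral_mono_set hint.integrableOn
      (Eventually.of_forall fun x => hh x) (Eventually.of_forall ?_)
    intro x hx
    exact lt_trans hx hn

end Helpers

/-- Concluding argument of Corollary "loglog la Bourgain": if u is a mass-Mu
    solution blowing up at T with asymptotic profile z⋆ (exterior L² convergence
    at every parabolic scale), M(z⋆) ≤ M(u) − M(Q), and along t_n → T⁻ one has
    λ(t_n) → 0 with exterior tail mass ≤ δ², then
    limsup_n M(1_{|x|<λ(t_n)} u(t_n)) ≥ M(Q) − δ². -/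
theorem stmt19 (d : ℕ) (hd : 1 ≤ d)
    (u : ℝ → EuclideanSpace ℝ (Fin d) → ℂ)
    (zst : EuclideanSpace ℝ (Fin d) → ℂ)
    (T Mu MQ δ : ℝ) (hMQ : 0 < MQ) (hδ : 0 < δ)
    (hmeas : ∀ t, AEStronglyMeasurable (u t)
      (volume : Measure (EuclideanSpace ℝ (Fin d))))
    (hzmeas : AEStronglyMeasurable zst
      (volume : Measure (EuclideanSpace ℝ (Fin d))))
    (hu2 : ∀ t, Integrable (fun x => ‖u t x‖ ^ 2)
      (volume : Measure (EuclideanSpace ℝ (Fin d))))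
    (hz2 : Integrable (fun x => ‖zst x‖ ^ 2)
      (volume : Measure (EuclideanSpace ℝ (Fin d))))
    (hmass : ∀ t < T, massOf (u t) = Mu)
    (hprof : ∀ ρ > (0 : ℝ),
      Tendsto (fun t => ∫ x in {x : EuclideanSpace ℝ (Fin d) |
          ρ * Real.sqrt (T - t) ≤ ‖x‖}, ‖u t x - zst x‖ ^ 2)
        (nhdsWithin T (Set.Iio T)) (nhds 0))
    (hz : massOf zst ≤ Mu - MQ)
    (tn lam : ℕ → ℝ)
    (htn : ∀ n, tn n < T) (htT : Tendsto tn atTop (nhds T))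
    (hlampos : ∀ n, 0 < lam n) (hlam : Tendsto lam atTop (nhds 0))
    (htail : ∀ n, ∫ x in {x : EuclideanSpace ℝ (Fin d) | lam n ≤ ‖x‖},
      ‖u (tn n) x - zst x‖ ^ 2 ≤ δ ^ 2) :
    MQ - δ ^ 2 ≤ limsup (fun n =>
      ∫ x in {x : EuclideanSpace ℝ (Fin d) | ‖x‖ < lam n}, ‖u (tn n) x‖ ^ 2)
      atTop := by
  have hzL2 : MemLp zst 2 (volume : Measure (EuclideanSpace ℝ (Fin d))) :=
    (memLp_two_iff_integrable_sq_norm hzmeas).mpr hz2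
  have huL2 : ∀ t, MemLp (u t) 2 (volume : Measure (EuclideanSpace ℝ (Fin d))) :=
    fun t => (memLp_two_iff_integrable_sq_norm (hmeas t)).mpr (hu2 t)
  have hfL2 : ∀ t, MemLp (u t - zst) 2 (volume : Measure (EuclideanSpace ℝ (Fin d))) :=
    fun t => (huL2 t).sub hzL2
  have hf2i : ∀ t, Integrable (fun x => ‖u t x - zst x‖ ^ 2)
      (volume : Measure (EuclideanSpace ℝ (Fin d))) := by
    intro t
    have := (memLp_two_iff_integrable_sq_norm (hfL2 t).1).mp (hfL2 t)
    simpa [Pi.sub_apply] using this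
  set Mz : ℝ := massOf zst with hMz_def
  have hMz_eq : Mz = ∫ x, ‖zst x‖ ^ 2 := rfl
  have hMz0 : 0 ≤ Mz := by
    rw [hMz_eq]; exact integral_nonneg fun x => by positivity
  have hMuMz : MQ ≤ Mu - Mz := by linarith [hz]
  have hSopen : ∀ c : ℝ, MeasurableSet {x : EuclideanSpace ℝ (Fin d) | ‖x‖ < c} :=
    fun c => (isOpen_lt continuous_norm continuous_const).measurableSet
  have hcompl : ∀ c : ℝ, {x : EuclideanSpace ℝ (Fin d) | ‖x‖ < c}ᶜ
      = {x : EuclideanSpace ℝ (Fin d) | c ≤ ‖x‖} := by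
    intro c; ext x; simp [not_lt]
  have hsplit : ∀ (c : ℝ) (g : EuclideanSpace ℝ (Fin d) → ℝ), Integrable g volume →
      (∫ x in {x : EuclideanSpace ℝ (Fin d) | ‖x‖ < c}, g x)
        + (∫ x in {x : EuclideanSpace ℝ (Fin d) | c ≤ ‖x‖}, g x) = ∫ x, g x := by
    intro c g hg
    rw [← hcompl c]
    exact integral_add_compl (hSopen c) hg
  -- sequences
  set r : ℕ → ℝ := fun n => Real.sqrt (T - tn n) with hr_def
  set A : ℕ → ℝ := fun n => ∫ x in {x : EuclideanSpace ℝ (Fin d) | r n ≤ ‖x‖},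
    ‖u (tn n) x - zst x‖ ^ 2 with hA_def
  set Z : ℕ → ℝ := fun n => ∫ x in {x : EuclideanSpace ℝ (Fin d) | ‖x‖ < r n},
    ‖zst x‖ ^ 2 with hZ_def
  set W : ℕ → ℝ := fun n => ∫ x in {x : EuclideanSpace ℝ (Fin d) | ‖x‖ < lam n},
    ‖zst x‖ ^ 2 with hW_def
  set G : ℕ → ℝ := fun n => (max 0 (Real.sqrt (max 0
    (Mu - (Real.sqrt (A n) + Real.sqrt Mz) ^ 2)) - Real.sqrt (Z n))) ^ 2 with hG_def
  set L : ℕ → ℝ := fun n => (max 0 (Real.sqrt (max 0 (G n - δ ^ 2))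
    - Real.sqrt (W n))) ^ 2 with hL_def
  -- limits
  have htn' : Tendsto tn atTop (nhdsWithin T (Set.Iio T)) :=
    tendsto_nhdsWithin_iff.mpr ⟨htT, Eventually.of_forall htn⟩
  have hAlim : Tendsto A atTop (nhds 0) := by
    have h := (hprof 1 one_pos).comp htn'
    simpa [hA_def, hr_def, Function.comp_def, one_mul] using h
  have hrlim : Tendsto r atTop (nhds 0) := by
    have h1 : Tendsto (fun n => T - tn n) atTop (nhds (T - T)) :=
      tendsto_const_nhds.sub htT
    rw [sub_self] at h1
    have h2 := h1.sqrt
    rw [Real.sqrt_zero] at h2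
    exact h2
  have hZlim : Tendsto Z atTop (nhds 0) :=
    ball_tendsto_zero hd hz2 (fun x => by positivity) hrlim
  have hWlim : Tendsto W atTop (nhds 0) :=
    ball_tendsto_zero hd hz2 (fun x => by positivity) hlam
  have hGlim : Tendsto G atTop (nhds (Mu - Mz)) := by
    have h1 : Tendsto (fun n => Mu - (Real.sqrt (A n) + Real.sqrt Mz) ^ 2) atTop
        (nhds (Mu - (Real.sqrt 0 + Real.sqrt Mz) ^ 2)) :=
      tendsto_const_nhds.sub ((hAlim.sqrt.add tendsto_const_nhds).pow 2)
    have h2 := ((((tendsto_const_nhds (x := (0:ℝ))).max h1).sqrt.sub hZlim.sqrt).max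
      (tendsto_const_nhds (x := (0:ℝ)))).pow 2
    have h3 : (max (Real.sqrt (max 0 (Mu - (Real.sqrt 0 + Real.sqrt Mz) ^ 2))
        - Real.sqrt 0) 0) ^ 2 = Mu - Mz := by
      rw [Real.sqrt_zero, zero_add, sub_zero]
      rw [Real.sq_sqrt hMz0]
      rw [max_eq_right (by linarith : (0:ℝ) ≤ Mu - Mz)]
      rw [max_eq_left (Real.sqrt_nonneg _)]
      exact Real.sq_sqrt (by linarith)
    rw [h3] at h2
    have h4 : G = fun n => (max (Real.sqrt (max 0
        (Mu - (Real.sqrt (A n) + Real.sqrt Mz) ^ 2)) - Real.sqrt (Z n)) 0) ^ 2 := by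
      funext n; rw [hG_def]; rw [max_comm]
    rw [h4]
    exact h2
  have hLlim : Tendsto L atTop (nhds (max 0 (Mu - Mz - δ ^ 2))) := by
    have h1 : Tendsto (fun n => G n - δ ^ 2) atTop (nhds (Mu - Mz - δ ^ 2)) :=
      hGlim.sub tendsto_const_nhds
    have h2 := ((((tendsto_const_nhds (x := (0:ℝ))).max h1).sqrt.sub hWlim.sqrt).max
      (tendsto_const_nhds (x := (0:ℝ)))).pow 2
    have h3 : (max (Real.sqrt (max 0 (Mu - Mz - δ ^ 2)) - Real.sqrt 0) 0) ^ 2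
        = max 0 (Mu - Mz - δ ^ 2) := by
      rw [Real.sqrt_zero, sub_zero, max_eq_left (Real.sqrt_nonneg _)]
      exact Real.sq_sqrt (le_max_left _ _)
    rw [h3] at h2
    have h4 : L = fun n => (max (Real.sqrt (max 0 (G n - δ ^ 2))
        - Real.sqrt (W n)) 0) ^ 2 := by
      funext n; rw [hL_def]; rw [max_comm]
    rw [h4]
    exact h2
  -- pointwise lower bound
  have key : ∀ n, L n ≤ ∫ x in {x : EuclideanSpace ℝ (Fin d) | ‖x‖ < lam n},
      ‖u (tn n) x‖ ^ 2 := by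
    intro n
    set t := tn n with ht_def
    -- Minkowski inequalities on arbitrary sets
    have mink1 : ∀ S : Set (EuclideanSpace ℝ (Fin d)),
        Real.sqrt (∫ x in S, ‖u t x - zst x‖ ^ 2)
          ≤ Real.sqrt (∫ x in S, ‖u t x‖ ^ 2) + Real.sqrt (∫ x in S, ‖zst x‖ ^ 2) := by
      intro S
      have h := my_mink (μ := (volume : Measure (EuclideanSpace ℝ (Fin d))).restrict S)
        ((huL2 t).restrict S) ((hzL2.neg).restrict S)
      simpa [Pi.neg_apply, ← sub_eq_add_neg, norm_neg] using h
    have mink2 : ∀ S : Set (EuclideanSpace ℝ (Fin d)),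
        Real.sqrt (∫ x in S, ‖u t x‖ ^ 2)
          ≤ Real.sqrt (∫ x in S, ‖u t x - zst x‖ ^ 2)
            + Real.sqrt (∫ x in S, ‖zst x‖ ^ 2) := by
      intro S
      have h := my_mink (μ := (volume : Measure (EuclideanSpace ℝ (Fin d))).restrict S)
        ((hfL2 t).restrict S) (hzL2.restrict S)
      simpa [Pi.sub_apply, sub_add_cancel] using h
    -- abbreviations
    have e_un : (∫ x, ‖u t x‖ ^ 2) = Mu := hmass t (htn n)
    set aS := ∫ x in {x : EuclideanSpace ℝ (Fin d) | ‖x‖ < lam n}, ‖u t x‖ ^ 2 with haS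
    set bS := ∫ x in {x : EuclideanSpace ℝ (Fin d) | ‖x‖ < lam n},
      ‖u t x - zst x‖ ^ 2 with hbS
    set cS := ∫ x in {x : EuclideanSpace ℝ (Fin d) | ‖x‖ < r n},
      ‖u t x - zst x‖ ^ 2 with hcS
    set uB := ∫ x in {x : EuclideanSpace ℝ (Fin d) | ‖x‖ < r n}, ‖u t x‖ ^ 2 with huB
    set eU := ∫ x in {x : EuclideanSpace ℝ (Fin d) | r n ≤ ‖x‖}, ‖u t x‖ ^ 2 with heU
    set eZ := ∫ x in {x : EuclideanSpace ℝ (Fin d) | r n ≤ ‖x‖}, ‖zst x‖ ^ 2 with heZ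
    set Mf := ∫ x, ‖u t x - zst x‖ ^ 2 with hMf
    have haS0 : 0 ≤ aS := integral_nonneg fun x => by positivity
    have hbS0 : 0 ≤ bS := integral_nonneg fun x => by positivity
    have hcS0 : 0 ≤ cS := integral_nonneg fun x => by positivity
    have huB0 : 0 ≤ uB := integral_nonneg fun x => by positivity
    have heU0 : 0 ≤ eU := integral_nonneg fun x => by positivity
    -- step: G n ≤ cS
    have hGcS : G n ≤ cS := by
      have h5 : uB + eU = Mu := by
        have := hsplit (r n) (fun x => ‖u t x‖ ^ 2) (hu2 t)
        rw [e_un] at this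
        exact this
      have h6 : Real.sqrt eU ≤ Real.sqrt (A n) + Real.sqrt Mz := by
        have h6a := mink2 {x : EuclideanSpace ℝ (Fin d) | r n ≤ ‖x‖}
        have h6b : eZ ≤ Mz := by
          rw [hMz_eq]
          exact setIntegral_le_integral hz2 (Eventually.of_forall fun x => by positivity)
        have h6c : Real.sqrt eZ ≤ Real.sqrt Mz := Real.sqrt_le_sqrt h6b
        calc Real.sqrt eU ≤ Real.sqrt (A n) + Real.sqrt eZ := h6a
          _ ≤ Real.sqrt (A n) + Real.sqrt Mz := by linarith
      have h7 : eU ≤ (Real.sqrt (A n) + Real.sqrt Mz) ^ 2 := by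
        calc eU = Real.sqrt eU ^ 2 := (Real.sq_sqrt heU0).symm
          _ ≤ (Real.sqrt (A n) + Real.sqrt Mz) ^ 2 :=
            pow_le_pow_left₀ (Real.sqrt_nonneg _) h6 2
      have hc : Mu - (Real.sqrt (A n) + Real.sqrt Mz) ^ 2 ≤ uB := by linarith
      have := sqrt_step hcS0 huB0 (mink2 _) hc
      rw [hG_def]
      exact this
    -- step: cS ≤ Mf
    have hcMf : cS ≤ Mf :=
      setIntegral_le_integral (hf2i t) (Eventually.of_forall fun x => by positivity)
    -- step: G n - δ^2 ≤ bS
    have hbMf : bS + (∫ x in {x : EuclideanSpace ℝ (Fin d) | lam n ≤ ‖x‖},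
        ‖u t x - zst x‖ ^ 2) = Mf :=
      hsplit (lam n) (fun x => ‖u t x - zst x‖ ^ 2) (hf2i t)
    have htail' := htail n
    have hcb : G n - δ ^ 2 ≤ bS := by linarith
    -- final
    have := sqrt_step haS0 hbS0 (mink1 _) hcb
    rw [hL_def]
    exact this
  -- limsup conclusion
  have hbdd : IsBoundedUnder (· ≤ ·) atTop (fun n =>
      ∫ x in {x : EuclideanSpace ℝ (Fin d) | ‖x‖ < lam n}, ‖u (tn n) x‖ ^ 2) := by
    refine isBoundedUnder_of ⟨Mu, fun n => ?_⟩
    have h1 : (∫ x in {x : EuclideanSpace ℝ (Fin d) | ‖x‖ < lam n}, ‖u (tn n) x‖ ^ 2)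
        ≤ ∫ x, ‖u (tn n) x‖ ^ 2 :=
      setIntegral_le_integral (hu2 (tn n)) (Eventually.of_forall fun x => by positivity)
    have h2 : (∫ x, ‖u (tn n) x‖ ^ 2) = Mu := hmass (tn n) (htn n)
    exact le_of_le_of_eq h1 h2
  have hcob : IsCoboundedUnder (· ≤ ·) atTop L := by
    apply IsBoundedUnder.isCoboundedUnder_le
    refine isBoundedUnder_of ⟨0, fun n => ?_⟩
    simp only [hL_def]
    positivity
  have hlimsup : limsup L atTop ≤ limsup (fun n =>
      ∫ x in {x : EuclideanSpace ℝ (Fin d) | ‖x‖ < lam n}, ‖u (tn n) x‖ ^ 2) atTop :=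
    limsup_le_limsup (Eventually.of_forall key) hcob hbdd
  have hLls : limsup L atTop = max 0 (Mu - Mz - δ ^ 2) := hLlim.limsup_eq
  have hfin : MQ - δ ^ 2 ≤ max 0 (Mu - Mz - δ ^ 2) := by
    have : MQ - δ ^ 2 ≤ Mu - Mz - δ ^ 2 := by linarith
    exact this.trans (le_max_right _ _)
  calc MQ - δ ^ 2 ≤ max 0 (Mu - Mz - δ ^ 2) := hfin
    _ = limsup L atTop := hLls.symm
    _ ≤ _ := hlimsup
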